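/- Let γ⁰ = 1 and γᵏ = γᵏ⁻¹(1 - θγᵏ⁻¹) for k ≥ 1, where θ ∈ (0,1). Then γᵏ ∈ (0,1] for all k, γᵏ is decreasing, γᵏ → 0, ∑ₖ γᵏ = +∞, and ∑ₖ (γᵏ)² < +∞. -/

import Mathlib

/-- Properties of the diminishing step-size rule
`γ⁰ = 1`, `γᵏ⁺¹ = γᵏ(1 - θγᵏ)` with `θ ∈ (0,1)`. -/
theorem stmt7 (θ : ℝ) (hθ : θ ∈ Set.Ioo (0 : ℝ) 1) (γ : ℕ → ℝ)
    (h0 : γ 0 = 1) (hrec : ∀ k, γ (k + 1) = γ k * (1 - θ * γ k)) :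
    (∀ k, γ k ∈ Set.Ioc (0 : ℝ) 1) ∧
    (∀ k, γ (k + 1) ≤ γ k) ∧
    Filter.Tendsto γ Filter.atTop (nhds 0) ∧
    ¬ Summable γ ∧
    Summable (fun k => (γ k) ^ 2) := by
  obtain ⟨hθ0, hθ1⟩ := hθ
  -- positivity and ≤ 1
  have hpos : ∀ k, 0 < γ k ∧ γ k ≤ 1 := by
    intro k
    induction k with
    | zero => simp [h0]
    | succ n ih =>
      obtain ⟨h1, h2⟩ := ih
      rw [hrec]
      constructor
      · apply mul_pos h1
        nlinarith
      · nlinarith [mul_pos (mul_pos hθ0 h1) h1]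
  -- upper bound : (1 + θ k) γ k ≤ 1
  have hub : ∀ k : ℕ, (1 + θ * k) * γ k ≤ 1 := by
    intro k
    induction k with
    | zero => simp [h0]
    | succ n ih =>
      obtain ⟨h1, h2⟩ := hpos n
      have h3 : 1 - θ * γ n > 0 := by nlinarith
      rw [hrec]
      push_cast
      nlinarith [mul_le_mul_of_nonneg_right ih h3.le, sq_nonneg (θ * γ n),
        mul_pos hθ0 h1]
  -- lower bound : (1 - θ) ≤ γ k * ((1 - θ) + θ k)
  have hlb : ∀ k : ℕ, (1 - θ) ≤ γ k * ((1 - θ) + θ * k) := by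
    intro k
    induction k with
    | zero => simp [h0]
    | succ n ih =>
      obtain ⟨h1, h2⟩ := hpos n
      have h3 : 1 - θ * γ n > 0 := by nlinarith
      rw [hrec]
      push_cast
      nlinarith [mul_nonneg (mul_nonneg (mul_nonneg hθ0.le hθ0.le) h1.le) (sub_nonneg.mpr h2),
        mul_le_mul_of_nonneg_right ih h3.le]
  refine ⟨fun k => ⟨(hpos k).1, (hpos k).2⟩, ?_, ?_, ?_, ?_⟩
  · intro k
    obtain ⟨h1, h2⟩ := hpos k
    rw [hrec]
    nlinarith [mul_pos (mul_pos hθ0 h1) h1]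
  · -- tendsto 0 : squeeze 0 ≤ γ k ≤ θ⁻¹ / (k+1)
    have hto : Filter.Tendsto (fun k : ℕ => θ⁻¹ / ((k : ℝ) + 1)) Filter.atTop (nhds 0) := by
      apply Filter.Tendsto.div_atTop tendsto_const_nhds
      exact Filter.tendsto_atTop_add_const_right _ 1 tendsto_natCast_atTop_atTop
    apply squeeze_zero (fun k => (hpos k).1.le) _ hto
    intro k
    have h := hub k
    have h1 : (0:ℝ) < 1 + θ * k := by positivity
    have h2 : θ * ((k:ℝ) + 1) ≤ 1 + θ * k := by nlinarith
    rw [inv_eq_one_div, div_div, le_div_iff₀ (by positivity)]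
    nlinarith [(hpos k).1, mul_le_mul_of_nonneg_left h2 (hpos k).1.le]
  · -- not summable
    intro hs
    have hc : Summable (fun k : ℕ => (1 - θ) / ((k : ℝ) + 1)) := by
      apply hs.of_nonneg_of_le
        (fun k => div_nonneg (by linarith) (by positivity))
      intro k
      rw [div_le_iff₀ (by positivity)]
      have hk : (1 - θ) + θ * (k : ℝ) ≤ (k : ℝ) + 1 := by
        nlinarith [mul_nonneg (sub_nonneg.mpr hθ1.le) (Nat.cast_nonneg (α := ℝ) k)]
      nlinarith [hlb k, mul_le_mul_of_nonneg_left hk (hpos k).1.le]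
    have hc2 : Summable (fun k : ℕ => 1 / ((k : ℝ) + 1)) := by
      have := hc.mul_left (1 - θ)⁻¹
      convert this using 2 with k
      · rfl
      rw [← mul_div_assoc, inv_mul_cancel₀ (by linarith : (1:ℝ) - θ ≠ 0)]
    have hc3 : Summable (fun n : ℕ => 1 / (n : ℝ)) := by
      rw [← summable_nat_add_iff 1]
      convert hc2 using 2 with k
      · rfl
      push_cast
      ring
    exact Real.not_summable_one_div_natCast hc3
  · -- summable squares
    have hb : Summable (fun k : ℕ => (θ⁻¹ / ((k : ℝ) + 1)) ^ 2) := by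
      have h2 : Summable (fun n : ℕ => 1 / ((n : ℝ)) ^ 2) :=
        (Real.summable_one_div_nat_pow).mpr one_lt_two
      have h3 : Summable (fun n : ℕ => 1 / ((n : ℝ) + 1) ^ 2) := by
        have := (summable_nat_add_iff 1).mpr h2
        convert this using 2 with k
        · rfl
        push_cast
        ring
      have := h3.mul_left (θ⁻¹ ^ 2)
      convert this using 2 with k
      · rfl
      rw [div_pow]
      ring
    apply hb.of_nonneg_of_le (fun k => sq_nonneg _)
    intro k
    have h1 : (0:ℝ) < (k:ℝ) + 1 := by positivity
    have h2 : γ k ≤ θ⁻¹ / ((k : ℝ) + 1) := by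
      rw [inv_eq_one_div, div_div, le_div_iff₀ (by positivity)]
      have h2 : θ * ((k:ℝ) + 1) ≤ 1 + θ * k := by nlinarith
      nlinarith [hub k, mul_le_mul_of_nonneg_left h2 (hpos k).1.le]
    exact pow_le_pow_left₀ (hpos k).1.le h2 2
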